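/- Let E be a Banach space with closed unit ball B carrying the weak topology. If B is Fréchet–Urysohn and has countable cs*-character, then B is first countable. -/

import Mathlib

open Filter Topology Set

/-- `X` has countable cs*-character at `x`. -/
def CountableCsStarCharacterAt (X : Type*) [TopologicalSpace X] (x : X) : Prop :=
  ∃ D : Set (Set X), D.Countable ∧
    ∀ u : ℕ → X, Tendsto u atTop (nhds x) →
      ∀ U ∈ nhds x, ∃ D₀ ∈ D, D₀ ⊆ U ∧ {n : ℕ | u n ∈ D₀}.Infinite

/-- Proposition 4.7 (main step): for a Banach space `E`, if the closed unit ball with the weak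
topology is Fréchet–Urysohn and has countable cs*-character, then it is first countable. -/
theorem ball_weak_firstCountable_of_FU_csStar
    {E : Type*} [NormedAddCommGroup E] [NormedSpace ℝ E] [CompleteSpace E]
    [FrechetUrysohnSpace {x : WeakSpace ℝ E // ‖(toWeakSpace ℝ E).symm x‖ ≤ 1}]
    (hcs : ∀ x : {x : WeakSpace ℝ E // ‖(toWeakSpace ℝ E).symm x‖ ≤ 1},
      CountableCsStarCharacterAt _ x) :
    FirstCountableTopology {x : WeakSpace ℝ E // ‖(toWeakSpace ℝ E).symm x‖ ≤ 1} := by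
  -- The weak topology is Hausdorff since the dual separates points.
  haveI hT2W : T2Space (WeakSpace ℝ E) := by
    have hinj : Function.Injective ((topDualPairing ℝ E).flip) := by
      intro a b hab
      have h : ∀ g : StrongDual ℝ E, g a = g b := by
        intro g
        have := LinearMap.congr_fun hab g
        simpa [topDualPairing_apply] using this
      exact (NormedSpace.eq_iff_forall_dual_eq ℝ).2 h
    exact (WeakBilin.isEmbedding hinj).t2Space
  haveI hSMulW : ContinuousSMul ℝ (WeakSpace ℝ E) :=
    WeakBilin.instContinuousSMul (topDualPairing ℝ E).flip
  refine ⟨fun x => ?_⟩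
  by_cases hiso : ({x} : Set {x : WeakSpace ℝ E // ‖(toWeakSpace ℝ E).symm x‖ ≤ 1}) ∈ 𝓝 x
  · have hpure : 𝓝 x = pure x := le_antisymm (le_pure_iff.2 hiso) (pure_le_nhds x)
    rw [hpure]
    infer_instance
  -- `x` is not isolated: get a sequence of points `≠ x` converging to `x`.
  have hxcl : x ∈ closure ({x}ᶜ : Set _) := by
    rw [mem_closure_iff_nhds]
    intro t ht
    by_contra hemp
    rw [Set.not_nonempty_iff_eq_empty] at hemp
    apply hiso
    apply mem_of_superset ht
    intro p hp
    by_contra hpc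
    exact Set.eq_empty_iff_forall_notMem.mp hemp p ⟨hp, hpc⟩
  obtain ⟨y, hyA, hyt⟩ := mem_closure_iff_seq_limit.mp hxcl
  have hy_ne : ∀ m, y m ≠ x := fun m => hyA m
  have hvy : Tendsto (fun m => (y m : WeakSpace ℝ E)) atTop (𝓝 (x : WeakSpace ℝ E)) :=
    tendsto_subtype_rng.mp hyt
  obtain ⟨D, hDc, hD⟩ := hcs x
  -- the candidate countable basis: finite unions of members of `D` which are neighborhoods of `x`
  set S' : Set (Set {x : WeakSpace ℝ E // ‖(toWeakSpace ℝ E).symm x‖ ≤ 1}) :=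
    {C | (∃ F : Set (Set {x : WeakSpace ℝ E // ‖(toWeakSpace ℝ E).symm x‖ ≤ 1}),
      F.Finite ∧ F ⊆ D ∧ ⋃₀ F = C) ∧ C ∈ 𝓝 x} with hS'
  have hS'c : S'.Countable := by
    have h1 : ((fun F : Set (Set {x : WeakSpace ℝ E // ‖(toWeakSpace ℝ E).symm x‖ ≤ 1}) =>
        ⋃₀ F) '' {F | F.Finite ∧ F ⊆ D}).Countable :=
      (countable_setOf_finite_subset hDc).image _
    apply h1.mono
    rintro C ⟨⟨F, h2, h3, h4⟩, -⟩
    exact ⟨F, ⟨h2, h3⟩, h4⟩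
  -- the key claim
  have key : ∀ U ∈ 𝓝 x, ∃ C ∈ S', C ⊆ U := by
    intro U hU
    set D' : Set (Set _) := {d | d ∈ D ∧ d ⊆ U} with hD'
    have hD'ne : D'.Nonempty := by
      obtain ⟨D₀, h1, h2, h3⟩ := hD (fun _ => x) tendsto_const_nhds U hU
      exact ⟨D₀, h1, h2⟩
    obtain ⟨f, hf⟩ := (hDc.mono (fun d hd => hd.1)).exists_eq_range hD'ne
    have hfD' : ∀ i, f i ∈ D' := fun i => hf ▸ mem_range_self i
    set En : ℕ → Set _ := fun n => ⋃ i ∈ Iic n, f i with hEn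
    -- some `En n` is an `∞`-barrier at `x`
    have hbar : ∃ n₀, ∀ u : ℕ → _, Tendsto u atTop (𝓝 x) → {kk | u kk ∈ En n₀}.Infinite := by
      by_contra hno
      push_neg at hno
      -- for each `n`, a sequence converging to `x` avoiding `En n`
      have hτ : ∀ n, ∃ τ : ℕ → _, Tendsto τ atTop (𝓝 x) ∧ ∀ kk, τ kk ∉ En n := by
        intro n
        obtain ⟨v, hvt, hvfin⟩ := hno n
        obtain ⟨N, hN⟩ := hvfin.bddAbove
        refine ⟨fun kk => v (kk + (N + 1)), hvt.comp (tendsto_add_atTop_nat _), fun kk hk => ?_⟩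
        have : kk + (N + 1) ≤ N := hN hk
        omega
      choose τ hτt hτav using hτ
      -- midpoints stay in the ball
      have hmidnorm : ∀ p q : {x : WeakSpace ℝ E // ‖(toWeakSpace ℝ E).symm x‖ ≤ 1},
          ‖(toWeakSpace ℝ E).symm ((2⁻¹ : ℝ) • ((p : WeakSpace ℝ E) + (q : WeakSpace ℝ E)))‖ ≤ 1 := by
        intro p q
        rw [map_smul, map_add, norm_smul]
        have hp := p.2
        have hq := q.2
        have hsum : ‖(toWeakSpace ℝ E).symm (p : WeakSpace ℝ E) +
            (toWeakSpace ℝ E).symm (q : WeakSpace ℝ E)‖ ≤ 2 :=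
          le_trans (norm_add_le _ _) (by linarith)
        have h2 : ‖(2⁻¹ : ℝ)‖ = 2⁻¹ := by norm_num [Real.norm_eq_abs]
        rw [h2]
        linarith
      set mid : {x : WeakSpace ℝ E // ‖(toWeakSpace ℝ E).symm x‖ ≤ 1} →
          {x : WeakSpace ℝ E // ‖(toWeakSpace ℝ E).symm x‖ ≤ 1} →
          {x : WeakSpace ℝ E // ‖(toWeakSpace ℝ E).symm x‖ ≤ 1} :=
        fun p q => ⟨(2⁻¹ : ℝ) • ((p : WeakSpace ℝ E) + (q : WeakSpace ℝ E)), hmidnorm p q⟩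
        with hmid
      have hmid_tendsto : ∀ {l : Filter ℕ} {g h : ℕ → _} {p q},
          Tendsto g l (𝓝 p) → Tendsto h l (𝓝 q) →
            Tendsto (fun i => mid (g i) (h i)) l (𝓝 (mid p q)) := by
        intro l g h p q hg hh
        rw [tendsto_subtype_rng] at hg hh ⊢
        exact (hg.add hh).const_smul (2⁻¹ : ℝ)
      set a : ℕ → ℕ → _ := fun n kk => mid (τ n kk) (y n) with ha
      set z : ℕ → _ := fun n => mid x (y n) with hz
      have hzt : Tendsto z atTop (𝓝 x) := by
        have h1 : Tendsto z atTop (𝓝 (mid x x)) := hmid_tendsto tendsto_const_nhds hyt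
        have h2 : mid x x = x := by
          apply Subtype.ext
          show (2⁻¹ : ℝ) • ((x : WeakSpace ℝ E) + (x : WeakSpace ℝ E)) = (x : WeakSpace ℝ E)
          rw [← two_smul ℝ, smul_smul]
          norm_num
        rwa [h2] at h1
      have hzne : ∀ m, z m ≠ x := by
        intro m hzx
        apply hy_ne m
        apply Subtype.ext
        have hval : (2⁻¹ : ℝ) • ((x : WeakSpace ℝ E) + (y m : WeakSpace ℝ E))
            = (x : WeakSpace ℝ E) := congrArg Subtype.val hzx
        have h3 := congrArg (fun v : WeakSpace ℝ E => (2 : ℝ) • v) hval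
        simp only [smul_smul] at h3
        norm_num at h3
        have h4 : (x : WeakSpace ℝ E) + (y m : WeakSpace ℝ E)
            = (x : WeakSpace ℝ E) + (x : WeakSpace ℝ E) := by
          rw [h3, two_smul]
        exact add_left_cancel h4
      have hat : ∀ n, Tendsto (a n) atTop (𝓝 (z n)) := fun n =>
        hmid_tendsto (hτt n) tendsto_const_nhds
      set A : Set _ := {p | p ≠ x ∧ ∃ n kk, a n kk = p} with hA
      have haneA : ∀ n, ∀ᶠ kk in atTop, a n kk ∈ A := by
        intro n
        have hfin : {kk | a n kk = x}.Finite := by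
          rw [← Set.not_infinite]
          intro hinf
          have hfreq : ∃ᶠ kk in atTop, a n kk = x :=
            Nat.frequently_atTop_iff_infinite.2 hinf
          exact hzne n (tendsto_nhds_unique_of_frequently_eq (hat n) tendsto_const_nhds hfreq)
        obtain ⟨N, hN⟩ := hfin.bddAbove
        rw [eventually_atTop]
        refine ⟨N + 1, fun kk hk => ⟨fun hx => ?_, n, kk, rfl⟩⟩
        have : kk ≤ N := hN hx
        omega
      have hxclA : x ∈ closure A := by
        have hzcl : ∀ n, z n ∈ closure A := fun n => mem_closure_of_tendsto (hat n) (haneA n)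
        have h1 : x ∈ closure (closure A) :=
          mem_closure_of_tendsto hzt (Eventually.of_forall hzcl)
        rwa [closure_closure] at h1
      obtain ⟨b, hbA, hbt⟩ := mem_closure_iff_seq_limit.mp hxclA
      have hbne : ∀ j, b j ≠ x := fun j => (hbA j).1
      choose n k hnk using fun j => (hbA j).2
      -- each fiber of `n` is finite
      have hfib : ∀ m, {j | n j = m}.Finite := by
        intro m
        rw [← Set.not_infinite]
        intro hS
        by_cases hκ : ∃ κ, {j | n j = m ∧ k j = κ}.Infinite
        · obtain ⟨κ, hκinf⟩ := hκ
          have hfreq : ∃ᶠ j in atTop, b j = a m κ := by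
            apply Nat.frequently_atTop_iff_infinite.2
            apply hκinf.mono
            rintro j ⟨h1, h2⟩
            show b j = a m κ
            rw [← hnk j, h1, h2]
          have heq := tendsto_nhds_unique_of_frequently_eq hbt tendsto_const_nhds hfreq
          obtain ⟨j, hj1, hj2⟩ := hκinf.nonempty
          exact hbne j (by rw [← hnk j, hj1, hj2, ← heq])
        · push_neg at hκ
          set l : Filter ℕ := atTop ⊓ 𝓟 {j | n j = m} with hl
          haveI hlne : l.NeBot := by
            rw [hl, ← Nat.cofinite_eq_atTop, cofinite_inf_principal_neBot_iff]
            exact hS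
          have hkfin : ∀ K, {j | n j = m ∧ k j < K}.Finite := by
            intro K
            induction K with
            | zero =>
              have : {j | n j = m ∧ k j < 0} = ∅ := by
                ext j; simp
              rw [this]; exact Set.finite_empty
            | succ K ih =>
              have hsub : {j | n j = m ∧ k j < K + 1} ⊆
                  {j | n j = m ∧ k j < K} ∪ {j | n j = m ∧ k j = K} := by
                rintro j ⟨h1, h2⟩
                rcases Nat.lt_succ_iff_lt_or_eq.mp h2 with h | h
                · exact Or.inl ⟨h1, h⟩
                · exact Or.inr ⟨h1, h⟩
              exact (ih.union (hκ K)).subset hsub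
          have hkt : Tendsto k l atTop := by
            rw [tendsto_atTop]
            intro K
            have hev : ∀ᶠ j in atTop, ¬(n j = m ∧ k j < K) := by
              have h1 := Set.Finite.eventually_cofinite_notMem (hkfin K)
              rwa [Nat.cofinite_eq_atTop] at h1
            rw [hl, eventually_inf_principal]
            filter_upwards [hev] with j hj hjm
            by_contra h
            exact hj ⟨hjm, Nat.lt_of_not_le h⟩
          have h1 : Tendsto (fun j => a m (k j)) l (𝓝 (z m)) := (hat m).comp hkt
          have h2 : Tendsto b l (𝓝 x) := hbt.mono_left inf_le_left
          have heq : ∀ᶠ j in l, b j = a m (k j) := by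
            rw [hl, eventually_inf_principal]
            filter_upwards with j hj
            rw [← hnk j]
            have : n j = m := hj
            rw [this]
          exact hzne m (tendsto_nhds_unique (h2.congr' heq) h1).symm
      have hlt : ∀ m, {j | n j < m}.Finite := by
        intro m
        induction m with
        | zero => simp
        | succ m ih =>
          have hsub : {j | n j < m + 1} ⊆ {j | n j < m} ∪ {j | n j = m} := by
            intro j hj
            rcases Nat.lt_succ_iff_lt_or_eq.mp hj with h | h
            · exact Or.inl h
            · exact Or.inr h
          exact (ih.union (hfib m)).subset hsub
      have hnt : Tendsto n atTop atTop := by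
        rw [tendsto_atTop]
        intro m
        obtain ⟨N, hN⟩ := (hlt m).bddAbove
        rw [eventually_atTop]
        refine ⟨N + 1, fun j hj => ?_⟩
        by_contra h
        have : j ≤ N := hN (Nat.lt_of_not_le h)
        omega
      -- the diagonal sequence
      set u : ℕ → _ := fun j => τ (n j) (k j) with hu
      have hut : Tendsto u atTop (𝓝 x) := by
        rw [tendsto_subtype_rng]
        have hval : ∀ j, (u j : WeakSpace ℝ E)
            = (2 : ℝ) • (b j : WeakSpace ℝ E) - (y (n j) : WeakSpace ℝ E) := by
          intro j
          have h0 : (2⁻¹ : ℝ) • ((τ (n j) (k j) : WeakSpace ℝ E) + (y (n j) : WeakSpace ℝ E))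
              = (b j : WeakSpace ℝ E) := congrArg Subtype.val (hnk j)
          have h1 := congrArg (fun v : WeakSpace ℝ E => (2 : ℝ) • v) h0
          simp only [smul_smul] at h1
          norm_num at h1
          exact eq_sub_of_add_eq h1
        have h2 : Tendsto
            (fun j => (2 : ℝ) • (b j : WeakSpace ℝ E) - (y (n j) : WeakSpace ℝ E)) atTop
            (𝓝 ((2 : ℝ) • (x : WeakSpace ℝ E) - (x : WeakSpace ℝ E))) :=
          ((tendsto_subtype_rng.mp hbt).const_smul (2 : ℝ)).sub (hvy.comp hnt)
        have h3 : (2 : ℝ) • (x : WeakSpace ℝ E) - (x : WeakSpace ℝ E) = (x : WeakSpace ℝ E) := by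
          rw [two_smul]; abel
        rw [h3] at h2
        exact h2.congr fun j => (hval j).symm
      obtain ⟨D₀, hD₀D, hD₀U, hD₀inf⟩ := hD u hut U hU
      have hD₀D' : D₀ ∈ D' := ⟨hD₀D, hD₀U⟩
      rw [hf] at hD₀D'
      obtain ⟨i, hi⟩ := hD₀D'
      have hsub : {j | u j ∈ D₀} ⊆ {j | n j < i} := by
        intro j hj
        by_contra h
        have hile : i ≤ n j := Nat.le_of_not_lt h
        apply hτav (n j) (k j)
        exact Set.mem_biUnion (mem_Iic.2 hile) (by rw [hi]; exact hj)
      exact (hD₀inf.mono hsub) (hlt i)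
    obtain ⟨n₀, hbar⟩ := hbar
    -- the `∞`-barrier `En n₀` is a neighborhood of `x` by Fréchet–Urysohn
    have hEnhd : En n₀ ∈ 𝓝 x := by
      by_contra hnot
      have hcl : x ∈ closure ((En n₀)ᶜ) := by
        rw [mem_closure_iff_nhds]
        intro t ht
        by_contra hemp
        rw [Set.not_nonempty_iff_eq_empty] at hemp
        apply hnot
        apply mem_of_superset ht
        intro p hp
        by_contra hpc
        exact Set.eq_empty_iff_forall_notMem.mp hemp p ⟨hp, hpc⟩
      obtain ⟨c, hcmem, hct⟩ := mem_closure_iff_seq_limit.mp hcl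
      obtain ⟨kk, hkk⟩ := (hbar c hct).nonempty
      exact hcmem kk hkk
    refine ⟨En n₀, ⟨⟨f '' Iic n₀, (Set.finite_Iic n₀).image f, ?_, ?_⟩, hEnhd⟩, ?_⟩
    · rintro d ⟨i, -, rfl⟩
      exact (hfD' i).1
    · rw [Set.sUnion_image]
    · intro p hp
      obtain ⟨i, hi, hpi⟩ := Set.mem_iUnion₂.mp hp
      exact (hfD' i).2 hpi
  -- conclude countable generation of `𝓝 x`
  refine ⟨⟨S', hS'c, le_antisymm ?_ ?_⟩⟩
  · exact le_generate_iff.2 fun C hC => hC.2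
  · intro V hV
    rw [Filter.mem_generate_iff]
    obtain ⟨C, hCS, hCV⟩ := key V hV
    exact ⟨{C}, by simpa using hCS, Set.finite_singleton C, by simpa using hCV⟩
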